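/- Let 0 < q < 1. For every x > 0, the inequality (ψ_q'(x) − ln q)² + ψ_q''(x) > 0 holds. -/

import Mathlib

open Real Set Filter Topology

lemma geo_summable (j : ℕ) {r : ℝ} (h0 : 0 ≤ r) (h1 : r < 1) :
    Summable (fun k : ℕ => ((k : ℝ) + 1) ^ j * r ^ (k + 1)) := by
  have h := summable_pow_mul_geometric_of_norm_lt_one (R := ℝ) j (r := r)
    (by rwa [Real.norm_eq_abs, abs_of_nonneg h0])
  have h2 := h.comp_injective Nat.succ_injective
  refine h2.congr fun k => ?_
  simp only [Function.comp, Nat.succ_eq_add_one]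
  push_cast
  ring

lemma geo0 {r : ℝ} (h0 : 0 ≤ r) (h1 : r < 1) :
    ∑' k : ℕ, r ^ (k + 1) = r / (1 - r) := by
  have : (fun k : ℕ => r ^ (k + 1)) = fun k : ℕ => r * r ^ k := by
    funext k; rw [pow_succ]; ring
  rw [this, tsum_mul_left, tsum_geometric_of_lt_one h0 h1, div_eq_mul_inv]

lemma geo1 {r : ℝ} (h0 : 0 ≤ r) (h1 : r < 1) :
    ∑' k : ℕ, ((k : ℝ) + 1) * r ^ (k + 1) = r / (1 - r) ^ 2 := by
  have hn : ‖r‖ < 1 := by rwa [Real.norm_eq_abs, abs_of_nonneg h0]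
  have hs : Summable (fun n : ℕ => (n : ℝ) * r ^ n) := by
    have := summable_pow_mul_geometric_of_norm_lt_one (R := ℝ) 1 hn
    simpa using this
  have h := Summable.tsum_eq_zero_add hs
  simp only [Nat.cast_zero, zero_mul, pow_zero, zero_add] at h
  rw [tsum_coe_mul_geometric_of_norm_lt_one hn] at h
  rw [h]
  apply tsum_congr; intro k; push_cast; ring

lemma geo2 {r : ℝ} (h0 : 0 ≤ r) (h1 : r < 1) :
    ∑' k : ℕ, ((k : ℝ) + 1) ^ 2 * r ^ (k + 1) = r * (1 + r) / (1 - r) ^ 3 := by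
  have hn : ‖r‖ < 1 := by rwa [Real.norm_eq_abs, abs_of_nonneg h0]
  have hr : (1 : ℝ) - r ≠ 0 := by linarith
  have hs2 : Summable (fun n : ℕ => (n : ℝ) ^ 2 * r ^ n) :=
    summable_pow_mul_geometric_of_norm_lt_one (R := ℝ) 2 hn
  have hs1 : Summable (fun n : ℕ => (n : ℝ) * r ^ n) := by
    have := summable_pow_mul_geometric_of_norm_lt_one (R := ℝ) 1 hn
    simpa using this
  have hs0 : Summable (fun n : ℕ => r ^ n) := summable_geometric_of_lt_one h0 h1
  set B := ∑' n : ℕ, (n : ℝ) ^ 2 * r ^ n with hB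
  have h := Summable.tsum_eq_zero_add hs2
  simp only [Nat.cast_zero, zero_mul, pow_zero, zero_add, ne_eq, OfNat.ofNat_ne_zero,
    not_false_eq_true, zero_pow] at h
  -- h : B = ∑' k, (↑(k+1))^2 * r^(k+1)
  have hsplit : (fun k : ℕ => ((k : ℝ) + 1) ^ 2 * r ^ (k + 1)) =
      fun k : ℕ => r * ((k : ℝ) ^ 2 * r ^ k) + (2 * r * ((k : ℝ) * r ^ k) + r * r ^ k) := by
    funext k; rw [pow_succ]; ring
  have hsum : ∑' k : ℕ, ((k : ℝ) + 1) ^ 2 * r ^ (k + 1)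
      = r * B + (2 * r * (r / (1 - r) ^ 2) + r * (1 - r)⁻¹) := by
    rw [hsplit, Summable.tsum_add ((hs2.mul_left r)) ((hs1.mul_left (2*r)).add (hs0.mul_left r)),
      Summable.tsum_add (hs1.mul_left (2*r)) (hs0.mul_left r), tsum_mul_left, tsum_mul_left,
      tsum_mul_left, tsum_coe_mul_geometric_of_norm_lt_one hn, tsum_geometric_of_lt_one h0 h1]
  have hshift : ∑' k : ℕ, ((k : ℝ) + 1) ^ 2 * r ^ (k + 1) = B := by
    rw [hB, h]; exact tsum_congr fun k => by push_cast; ring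
  rw [hshift] at hsum
  rw [hshift]
  have h2 : B * (1 - r) = 2 * r * (r / (1 - r) ^ 2) + r * (1 - r)⁻¹ := by linarith [hsum]
  field_simp at h2
  field_simp
  nlinarith [h2, sq_nonneg (1 - r)]

lemma exp_half_bound {u : ℝ} (hu : 0 ≤ u) : 1 - u / 2 ≤ (1 + u / 2) * Real.exp (-u) := by
  set h : ℝ → ℝ := fun z => (1 + z / 2) * Real.exp (-z) - (1 - z / 2) with hh
  have hd : ∀ z : ℝ, HasDerivAt h
      (1 / 2 * Real.exp (-z) + (1 + z / 2) * -Real.exp (-z) + 1 / 2) z := by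
    intro z
    have h1 : HasDerivAt (fun z : ℝ => 1 + z / 2) (1 / 2) z := by
      simpa using ((hasDerivAt_id z).div_const 2).const_add 1
    have h2 : HasDerivAt (fun z : ℝ => Real.exp (-z)) (-Real.exp (-z)) z := by
      simpa using ((hasDerivAt_id z).neg).exp
    have h3 : HasDerivAt (fun z : ℝ => 1 - z / 2) (-(1 / 2)) z := by
      simpa using ((hasDerivAt_id z).div_const 2).const_sub 1
    have := (h1.mul h2).sub h3
    rw [show 1 / 2 * Real.exp (-z) + (1 + z / 2) * -Real.exp (-z) + 1 / 2
      = 1 / 2 * Real.exp (-z) + (1 + z / 2) * -Real.exp (-z) - -(1 / 2) by ring]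
    exact this
  have hmono : MonotoneOn h (Ici 0) := by
    apply monotoneOn_of_deriv_nonneg (convex_Ici 0)
    · exact fun z _ => ((hd z).differentiableAt.continuousAt).continuousWithinAt
    · exact fun z _ => (hd z).differentiableAt.differentiableWithinAt
    · intro z hz
      rw [(hd z).deriv]
      have hez := Real.exp_pos z
      have h1 := Real.add_one_le_exp z
      have h2 : Real.exp (-z) * Real.exp z = 1 := by rw [← Real.exp_add]; simp
      have h3 : (1 + z) * Real.exp (-z) ≤ 1 := by
        nlinarith [Real.exp_pos (-z)]
      nlinarith [Real.exp_pos (-z)]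
  have h0 : h 0 = 0 := by simp [hh]
  have := hmono (self_mem_Ici) (show u ∈ Ici (0:ℝ) from hu) hu
  rw [h0] at this
  simp only [hh] at this
  linarith

lemma exp_c_pow (k : ℕ) (a : ℝ) :
    Real.exp (((k : ℝ) + 1) * a) = (Real.exp a) ^ (k + 1) := by
  rw [← Real.exp_nat_mul]; congr 1; push_cast; ring

section master
variable {q : ℝ}

lemma summable_b_exp (hq0 : 0 < q) (hq1 : q < 1) (b : ℕ → ℝ) (C : ℝ) (j : ℕ)
    (hb : ∀ k, |b k| ≤ C * ((k : ℝ) + 1) ^ j) {y : ℝ} (hy : 0 < y) :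
    Summable (fun k : ℕ => b k * Real.exp (((k : ℝ) + 1) * Real.log q * y)) := by
  have hlq : Real.log q < 0 := Real.log_neg hq0 hq1
  set r : ℝ := Real.exp (Real.log q * y) with hr
  have hr0 : 0 < r := Real.exp_pos _
  have hr1 : r < 1 := by
    rw [hr, Real.exp_lt_one_iff]
    exact mul_neg_of_neg_of_pos hlq hy
  apply Summable.of_norm_bounded ((geo_summable j hr0.le hr1).mul_left C)
  intro k
  have he : Real.exp (((k : ℝ) + 1) * Real.log q * y) = r ^ (k + 1) := by
    rw [mul_assoc, exp_c_pow]
  rw [norm_mul, he, Real.norm_eq_abs, Real.norm_eq_abs, abs_of_pos (pow_pos hr0 _)]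
  calc |b k| * r ^ (k + 1) ≤ C * ((k : ℝ) + 1) ^ j * r ^ (k + 1) := by
        apply mul_le_mul_of_nonneg_right (hb k) (pow_pos hr0 _).le
    _ = C * (((k : ℝ) + 1) ^ j * r ^ (k + 1)) := by ring

lemma hasDerivAt_tsum_exp (hq0 : 0 < q) (hq1 : q < 1) (b : ℕ → ℝ) (C : ℝ)
    (hb : ∀ k, |b k| ≤ C * ((k : ℝ) + 1)) {y : ℝ} (hy : 0 < y) :
    HasDerivAt (fun z => ∑' k : ℕ, b k * Real.exp (((k : ℝ) + 1) * Real.log q * z))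
      (∑' k : ℕ, b k * (((k : ℝ) + 1) * Real.log q)
        * Real.exp (((k : ℝ) + 1) * Real.log q * y)) y := by
  have hlq : Real.log q < 0 := Real.log_neg hq0 hq1
  set c : ℕ → ℝ := fun k => ((k : ℝ) + 1) * Real.log q with hc
  have hck : ∀ k, c k < 0 := fun k =>
    mul_neg_of_pos_of_neg (by positivity) hlq
  set r : ℝ := Real.exp (Real.log q * (y / 2)) with hr
  have hr0 : 0 < r := Real.exp_pos _
  have hr1 : r < 1 := by
    rw [hr, Real.exp_lt_one_iff]
    exact mul_neg_of_neg_of_pos hlq (by linarith)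
  have hterm : ∀ (k : ℕ) (z : ℝ), HasDerivAt (fun z => b k * Real.exp (c k * z))
      (b k * (Real.exp (c k * z) * c k)) z := by
    intro k z
    have h1 : HasDerivAt (fun z : ℝ => c k * z) (c k) z := by
      simpa using (hasDerivAt_id z).const_mul (c k)
    exact h1.exp.const_mul (b k)
  have hbound : ∀ (k : ℕ) (z : ℝ), z ∈ Ioi (y / 2) →
      ‖b k * (Real.exp (c k * z) * c k)‖ ≤ (|C| * -Real.log q) * (((k : ℝ) + 1) ^ 2 * r ^ (k + 1)) := by
    intro k z hz
    have hz' : y / 2 < z := hz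
    have hexp : Real.exp (c k * z) ≤ r ^ (k + 1) := by
      rw [← exp_c_pow k (Real.log q * (y / 2))]
      apply Real.exp_le_exp.2
      have : c k * z ≤ c k * (y / 2) :=
        mul_le_mul_of_nonpos_left hz'.le (hck k).le
      calc c k * z ≤ c k * (y / 2) := this
        _ = ((k : ℝ) + 1) * (Real.log q * (y / 2)) := by rw [hc]; ring
    rw [norm_mul, norm_mul, Real.norm_eq_abs, Real.norm_eq_abs, Real.norm_eq_abs,
      abs_of_pos (Real.exp_pos _), abs_of_neg (hck k)]
    have h1 : |b k| ≤ |C| * ((k : ℝ) + 1) := (hb k).trans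
      (mul_le_mul_of_nonneg_right (le_abs_self C) (by positivity))
    have h2 : -c k = ((k : ℝ) + 1) * -Real.log q := by rw [hc]; ring
    have hek : 0 ≤ Real.exp (c k * z) := (Real.exp_pos _).le
    calc |b k| * (Real.exp (c k * z) * -c k)
        ≤ (|C| * ((k : ℝ) + 1)) * (r ^ (k + 1) * (((k : ℝ) + 1) * -Real.log q)) := by
          rw [h2]
          have hL : (0:ℝ) ≤ -Real.log q := by linarith
          have hkL : (0:ℝ) ≤ ((k : ℝ) + 1) * -Real.log q := by positivity
          apply mul_le_mul h1 _ (by positivity) (by positivity)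
          exact mul_le_mul_of_nonneg_right hexp hkL
      _ = (|C| * -Real.log q) * (((k : ℝ) + 1) ^ 2 * r ^ (k + 1)) := by ring
  have husum : Summable (fun k : ℕ => (|C| * -Real.log q) * (((k : ℝ) + 1) ^ 2 * r ^ (k + 1))) :=
    (geo_summable 2 hr0.le hr1).mul_left _
  have hderiv := hasDerivAt_of_tendstoUniformlyOn (isOpen_Ioi (a := y / 2))
    (f := fun (n : ℕ) (z : ℝ) => ∑ k ∈ Finset.range n, b k * Real.exp (c k * z))
    (f' := fun (n : ℕ) (z : ℝ) => ∑ k ∈ Finset.range n, b k * (Real.exp (c k * z) * c k))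
    (g := fun z => ∑' k : ℕ, b k * Real.exp (c k * z))
    (g' := fun z => ∑' k : ℕ, b k * (Real.exp (c k * z) * c k))
    (tendstoUniformlyOn_tsum_nat husum hbound)
    (Filter.Eventually.of_forall fun n z _ => HasDerivAt.fun_sum fun k _ => hterm k z)
    (fun z hz => by
      have hz0 : 0 < z := lt_trans (by linarith) hz
      exact (summable_b_exp hq0 hq1 b C 1 (by simpa using hb) hz0).hasSum.tendsto_sum_nat)
    (show y ∈ Ioi (y / 2) by simp; linarith)
  have : (∑' k : ℕ, b k * (Real.exp (c k * y) * c k))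
      = ∑' k : ℕ, b k * (((k : ℝ) + 1) * Real.log q) * Real.exp (((k : ℝ) + 1) * Real.log q * y) := by
    exact tsum_congr fun k => by rw [hc]; ring
  rw [← this]
  exact hderiv
end master

lemma one_sub_pow_pos {q : ℝ} (hq0 : 0 < q) (hq1 : q < 1) (k : ℕ) : 0 < 1 - q ^ (k + 1) := by
  have : q ^ (k + 1) < 1 := pow_lt_one₀ hq0.le hq1 (Nat.succ_ne_zero k)
  linarith

lemma inv_one_sub_pow_le {q : ℝ} (hq0 : 0 < q) (hq1 : q < 1) (k : ℕ) :
    (1 - q ^ (k + 1))⁻¹ ≤ (1 - q)⁻¹ := by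
  have h1 : q ^ (k + 1) ≤ q := by
    calc q ^ (k + 1) ≤ q ^ 1 := pow_le_pow_of_le_one hq0.le hq1.le (by omega)
      _ = q := pow_one q
  exact inv_anti₀ (by linarith) (by linarith)

noncomputable def qS (q y : ℝ) : ℝ :=
  ∑' k : ℕ, ((k : ℝ) + 1) * (1 - q ^ (k + 1))⁻¹ * Real.exp (((k : ℝ) + 1) * Real.log q * y)

noncomputable def qT (q y : ℝ) : ℝ :=
  ∑' k : ℕ, ((k : ℝ) + 1) ^ 2 * (1 - q ^ (k + 1))⁻¹ * Real.exp (((k : ℝ) + 1) * Real.log q * y)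

-- summability of the qS/qT series
lemma summable_qS {q : ℝ} (hq0 : 0 < q) (hq1 : q < 1) {y : ℝ} (hy : 0 < y) :
    Summable (fun k : ℕ =>
      ((k : ℝ) + 1) * (1 - q ^ (k + 1))⁻¹ * Real.exp (((k : ℝ) + 1) * Real.log q * y)) := by
  apply summable_b_exp hq0 hq1 _ ((1 - q)⁻¹) 1 _ hy
  intro k
  have h1 := one_sub_pow_pos hq0 hq1 k
  have h2 := inv_one_sub_pow_le hq0 hq1 k
  rw [abs_of_nonneg (by positivity)]
  calc ((k : ℝ) + 1) * (1 - q ^ (k + 1))⁻¹ ≤ ((k : ℝ) + 1) * (1 - q)⁻¹ := by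
        apply mul_le_mul_of_nonneg_left h2 (by positivity)
    _ = (1 - q)⁻¹ * ((k : ℝ) + 1) ^ 1 := by ring

lemma summable_qT {q : ℝ} (hq0 : 0 < q) (hq1 : q < 1) {y : ℝ} (hy : 0 < y) :
    Summable (fun k : ℕ =>
      ((k : ℝ) + 1) ^ 2 * (1 - q ^ (k + 1))⁻¹ * Real.exp (((k : ℝ) + 1) * Real.log q * y)) := by
  apply summable_b_exp hq0 hq1 _ ((1 - q)⁻¹) 2 _ hy
  intro k
  have h1 := one_sub_pow_pos hq0 hq1 k
  have h2 := inv_one_sub_pow_le hq0 hq1 k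
  rw [abs_of_nonneg (by positivity)]
  calc ((k : ℝ) + 1) ^ 2 * (1 - q ^ (k + 1))⁻¹ ≤ ((k : ℝ) + 1) ^ 2 * (1 - q)⁻¹ := by
        apply mul_le_mul_of_nonneg_left h2 (by positivity)
    _ = (1 - q)⁻¹ * ((k : ℝ) + 1) ^ 2 := by ring

lemma exp_pow_eq {q : ℝ} (hq0 : 0 < q) (k : ℕ) (y : ℝ) :
    Real.exp (((k : ℝ) + 1) * Real.log q * y) = (Real.exp (Real.log q * y)) ^ (k + 1) := by
  rw [mul_assoc, exp_c_pow]

lemma exp_r_pos {q : ℝ} (y : ℝ) : 0 < Real.exp (Real.log q * y) := Real.exp_pos _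

lemma exp_r_lt_one {q : ℝ} (hq0 : 0 < q) (hq1 : q < 1) {y : ℝ} (hy : 0 < y) :
    Real.exp (Real.log q * y) < 1 := by
  rw [Real.exp_lt_one_iff]
  exact mul_neg_of_neg_of_pos (Real.log_neg hq0 hq1) hy

lemma exp_shift {q : ℝ} (hq0 : 0 < q) (k : ℕ) (y : ℝ) :
    Real.exp (((k : ℝ) + 1) * Real.log q * (y + 1))
      = Real.exp (((k : ℝ) + 1) * Real.log q * y) * q ^ (k + 1) := by
  rw [show ((k : ℝ) + 1) * Real.log q * (y + 1)
      = ((k : ℝ) + 1) * Real.log q * y + ((k : ℝ) + 1) * Real.log q by ring,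
    Real.exp_add, exp_c_pow, Real.exp_log hq0]

lemma qS_sub {q : ℝ} (hq0 : 0 < q) (hq1 : q < 1) {y : ℝ} (hy : 0 < y) :
    qS q y - qS q (y + 1)
      = Real.exp (Real.log q * y) / (1 - Real.exp (Real.log q * y)) ^ 2 := by
  have hy1 : 0 < y + 1 := by linarith
  have hr0 : 0 < Real.exp (Real.log q * y) := Real.exp_pos _
  have hr1 := exp_r_lt_one hq0 hq1 hy
  unfold qS
  rw [← Summable.tsum_sub (summable_qS hq0 hq1 hy) (summable_qS hq0 hq1 hy1), ← geo1 hr0.le hr1]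
  apply tsum_congr
  intro k
  have h1 := one_sub_pow_pos hq0 hq1 k
  rw [exp_shift hq0, exp_pow_eq hq0]
  field_simp

lemma qT_sub {q : ℝ} (hq0 : 0 < q) (hq1 : q < 1) {y : ℝ} (hy : 0 < y) :
    qT q y - qT q (y + 1)
      = Real.exp (Real.log q * y) * (1 + Real.exp (Real.log q * y))
        / (1 - Real.exp (Real.log q * y)) ^ 3 := by
  have hy1 : 0 < y + 1 := by linarith
  have hr0 : 0 < Real.exp (Real.log q * y) := Real.exp_pos _
  have hr1 := exp_r_lt_one hq0 hq1 hy
  unfold qT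
  rw [← Summable.tsum_sub (summable_qT hq0 hq1 hy) (summable_qT hq0 hq1 hy1), ← geo2 hr0.le hr1]
  apply tsum_congr
  intro k
  have h1 := one_sub_pow_pos hq0 hq1 k
  rw [exp_shift hq0, exp_pow_eq hq0]
  field_simp

lemma qS_lower {q : ℝ} (hq0 : 0 < q) (hq1 : q < 1) {y : ℝ} (hy : 0 < y) :
    Real.exp (Real.log q * y) / (1 - Real.exp (Real.log q * y)) +
      -Real.log q / 2 * (Real.exp (Real.log q * y) / (1 - Real.exp (Real.log q * y)) ^ 2)
    ≤ -Real.log q * qS q y := by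
  set r := Real.exp (Real.log q * y) with hrdef
  have hr0 : 0 < r := Real.exp_pos _
  have hr1 : r < 1 := exp_r_lt_one hq0 hq1 hy
  have hL : 0 < -Real.log q := by
    have := Real.log_neg hq0 hq1; linarith
  have hs0 : Summable (fun k : ℕ => r ^ (k + 1)) := by
    simpa using geo_summable 0 hr0.le hr1
  have hs1 : Summable (fun k : ℕ => ((k : ℝ) + 1) * r ^ (k + 1)) := by
    simpa using geo_summable 1 hr0.le hr1
  have hLHS : r / (1 - r) + -Real.log q / 2 * (r / (1 - r) ^ 2)
      = ∑' k : ℕ, ((1 : ℝ) + -Real.log q * ((k : ℝ) + 1) / 2) * r ^ (k + 1) := by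
    have h1 : (fun k : ℕ => ((1 : ℝ) + -Real.log q * ((k : ℝ) + 1) / 2) * r ^ (k + 1))
        = fun k : ℕ => r ^ (k + 1) + -Real.log q / 2 * (((k : ℝ) + 1) * r ^ (k + 1)) := by
      funext k; ring
    rw [h1, Summable.tsum_add hs0 (hs1.mul_left _), tsum_mul_left, geo0 hr0.le hr1, geo1 hr0.le hr1]
  rw [hLHS]
  unfold qS
  rw [← tsum_mul_left]
  apply Summable.tsum_le_tsum _ _ ((summable_qS hq0 hq1 hy).mul_left _)
  · intro k
    have h1 := one_sub_pow_pos hq0 hq1 k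
    set u : ℝ := ((k : ℝ) + 1) * -Real.log q with hudef
    have hu : 0 ≤ u := by positivity
    have hqk : q ^ (k + 1) = Real.exp (-u) := by
      rw [show -u = ((k : ℝ) + 1) * Real.log q by rw [hudef]; ring, exp_c_pow,
        Real.exp_log hq0]
    have hb := exp_half_bound hu
    have hkey : (1 + u / 2) * (1 - q ^ (k + 1)) ≤ u := by
      have hexpand : (1 + u / 2) * (1 - Real.exp (-u))
          = (1 + u / 2) - (1 + u / 2) * Real.exp (-u) := by ring
      rw [hqk, hexpand]; linarith
    have hdiv : 1 + u / 2 ≤ u * (1 - q ^ (k + 1))⁻¹ := by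
      rw [← div_eq_mul_inv, le_div_iff₀ h1]; exact hkey
    have hmul := mul_le_mul_of_nonneg_right hdiv (pow_nonneg hr0.le (k + 1))
    calc (1 + -Real.log q * ((k : ℝ) + 1) / 2) * r ^ (k + 1)
        = (1 + u / 2) * r ^ (k + 1) := by rw [hudef]; ring_nf
      _ ≤ u * (1 - q ^ (k + 1))⁻¹ * r ^ (k + 1) := hmul
      _ = -Real.log q * (((k : ℝ) + 1) * (1 - q ^ (k + 1))⁻¹
            * Real.exp (((k : ℝ) + 1) * Real.log q * y)) := by
          rw [exp_pow_eq hq0, hudef]; ring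
  · have heq : (fun k : ℕ => ((1 : ℝ) + -Real.log q * ((k : ℝ) + 1) / 2) * r ^ (k + 1))
        = fun k : ℕ => r ^ (k + 1) + -Real.log q / 2 * (((k : ℝ) + 1) * r ^ (k + 1)) := by
      funext k; ring
    rw [heq]
    exact hs0.add (hs1.mul_left _)

lemma qS_nonneg {q : ℝ} (hq0 : 0 < q) (hq1 : q < 1) (y : ℝ) : 0 ≤ qS q y := by
  apply tsum_nonneg
  intro k
  have h1 := one_sub_pow_pos hq0 hq1 k
  have := Real.exp_pos (((k : ℝ) + 1) * Real.log q * y)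
  positivity

lemma qT_nonneg {q : ℝ} (hq0 : 0 < q) (hq1 : q < 1) (y : ℝ) : 0 ≤ qT q y := by
  apply tsum_nonneg
  intro k
  have h1 := one_sub_pow_pos hq0 hq1 k
  have := Real.exp_pos (((k : ℝ) + 1) * Real.log q * y)
  positivity

lemma exp_nat_shift {q : ℝ} (hq0 : 0 < q) (k n : ℕ) (x : ℝ) :
    Real.exp (((k : ℝ) + 1) * Real.log q * (x + (n : ℝ)))
      = Real.exp (((k : ℝ) + 1) * Real.log q * x) * (q ^ n) ^ (k + 1) := by
  rw [show ((k : ℝ) + 1) * Real.log q * (x + (n : ℝ))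
      = ((k : ℝ) + 1) * Real.log q * x + ((k : ℝ) + 1) * (Real.log q * (n : ℝ)) by ring,
    Real.exp_add, exp_c_pow]
  congr 2
  rw [mul_comm, Real.exp_nat_mul, Real.exp_log hq0]

lemma qS_shift_le {q : ℝ} (hq0 : 0 < q) (hq1 : q < 1) {x : ℝ} (hx : 0 < x) (n : ℕ) :
    qS q (x + (n : ℝ)) ≤ q ^ n * qS q x := by
  have hxn : 0 < x + (n : ℝ) := by positivity
  unfold qS
  rw [← tsum_mul_left]
  apply Summable.tsum_le_tsum _ (summable_qS hq0 hq1 hxn) ((summable_qS hq0 hq1 hx).mul_left _)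
  intro k
  have h1 := one_sub_pow_pos hq0 hq1 k
  have hqn : (q ^ n) ^ (k + 1) ≤ q ^ n := by
    calc (q ^ n) ^ (k + 1) ≤ (q ^ n) ^ 1 :=
          pow_le_pow_of_le_one (by positivity) (pow_le_one₀ hq0.le hq1.le) (by omega)
      _ = q ^ n := pow_one _
  rw [exp_nat_shift hq0]
  have hpos : 0 ≤ ((k : ℝ) + 1) * (1 - q ^ (k + 1))⁻¹
      * Real.exp (((k : ℝ) + 1) * Real.log q * x) := by
    have := Real.exp_pos (((k : ℝ) + 1) * Real.log q * x)
    positivity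
  calc ((k : ℝ) + 1) * (1 - q ^ (k + 1))⁻¹
        * (Real.exp (((k : ℝ) + 1) * Real.log q * x) * (q ^ n) ^ (k + 1))
      = (((k : ℝ) + 1) * (1 - q ^ (k + 1))⁻¹
        * Real.exp (((k : ℝ) + 1) * Real.log q * x)) * (q ^ n) ^ (k + 1) := by ring
    _ ≤ (((k : ℝ) + 1) * (1 - q ^ (k + 1))⁻¹
        * Real.exp (((k : ℝ) + 1) * Real.log q * x)) * q ^ n :=
          mul_le_mul_of_nonneg_left hqn hpos
    _ = q ^ n * (((k : ℝ) + 1) * (1 - q ^ (k + 1))⁻¹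
        * Real.exp (((k : ℝ) + 1) * Real.log q * x)) := by ring

lemma qT_shift_le {q : ℝ} (hq0 : 0 < q) (hq1 : q < 1) {x : ℝ} (hx : 0 < x) (n : ℕ) :
    qT q (x + (n : ℝ)) ≤ q ^ n * qT q x := by
  have hxn : 0 < x + (n : ℝ) := by positivity
  unfold qT
  rw [← tsum_mul_left]
  apply Summable.tsum_le_tsum _ (summable_qT hq0 hq1 hxn) ((summable_qT hq0 hq1 hx).mul_left _)
  intro k
  have h1 := one_sub_pow_pos hq0 hq1 k
  have hqn : (q ^ n) ^ (k + 1) ≤ q ^ n := by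
    calc (q ^ n) ^ (k + 1) ≤ (q ^ n) ^ 1 :=
          pow_le_pow_of_le_one (by positivity) (pow_le_one₀ hq0.le hq1.le) (by omega)
      _ = q ^ n := pow_one _
  rw [exp_nat_shift hq0]
  have hpos : 0 ≤ ((k : ℝ) + 1) ^ 2 * (1 - q ^ (k + 1))⁻¹
      * Real.exp (((k : ℝ) + 1) * Real.log q * x) := by
    have := Real.exp_pos (((k : ℝ) + 1) * Real.log q * x)
    positivity
  calc ((k : ℝ) + 1) ^ 2 * (1 - q ^ (k + 1))⁻¹
        * (Real.exp (((k : ℝ) + 1) * Real.log q * x) * (q ^ n) ^ (k + 1))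
      = (((k : ℝ) + 1) ^ 2 * (1 - q ^ (k + 1))⁻¹
        * Real.exp (((k : ℝ) + 1) * Real.log q * x)) * (q ^ n) ^ (k + 1) := by ring
    _ ≤ (((k : ℝ) + 1) ^ 2 * (1 - q ^ (k + 1))⁻¹
        * Real.exp (((k : ℝ) + 1) * Real.log q * x)) * q ^ n :=
          mul_le_mul_of_nonneg_left hqn hpos
    _ = q ^ n * (((k : ℝ) + 1) ^ 2 * (1 - q ^ (k + 1))⁻¹
        * Real.exp (((k : ℝ) + 1) * Real.log q * x)) := by ring

lemma step_ineq {q : ℝ} (hq0 : 0 < q) (hq1 : q < 1) {y : ℝ} (hy : 0 < y) :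
    (-Real.log q * qS q (y + 1) + 1) ^ 2 - -Real.log q * qT q (y + 1)
      ≤ (-Real.log q * qS q y + 1) ^ 2 - -Real.log q * qT q y := by
  set L : ℝ := -Real.log q with hLdef
  set r : ℝ := Real.exp (Real.log q * y) with hrdef
  have hr0 : 0 < r := Real.exp_pos _
  have hr1 : r < 1 := exp_r_lt_one hq0 hq1 hy
  have hr2 : 0 < 1 - r := by linarith
  have hL : 0 < L := by
    have := Real.log_neg hq0 hq1; rw [hLdef]; linarith
  have hLq : 1 - q ≤ L := by
    have := Real.log_le_sub_one_of_pos hq0; rw [hLdef]; linarith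
  have hy1 : 0 < y + 1 := by linarith
  have hR : Real.exp (Real.log q * (y + 1)) = q * r := by
    rw [mul_add, mul_one, Real.exp_add, Real.exp_log hq0, hrdef]; ring
  have hR0 : 0 < q * r := by positivity
  have hR1 : q * r < 1 := by nlinarith
  have hR2 : 0 < 1 - q * r := by linarith
  have hSsub := qS_sub hq0 hq1 hy
  have hTsub := qT_sub hq0 hq1 hy
  rw [← hrdef] at hSsub hTsub
  have hlow := qS_lower hq0 hq1 hy1
  rw [hR, ← hLdef] at hlow
  -- key cleared inequality
  have key2 : (3 * r - 1) / (1 - r)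
      ≤ L * (r / (1 - r) ^ 2) + (2 * (q * r / (1 - q * r)) + L * (q * r / (1 - q * r) ^ 2)) := by
    have e : L * (r / (1 - r) ^ 2) + (2 * (q * r / (1 - q * r)) + L * (q * r / (1 - q * r) ^ 2))
        - (3 * r - 1) / (1 - r)
        = ((L - (1 - q)) * (r * (1 - q * r) ^ 2 + q * r * (1 - r) ^ 2)
            + (q ^ 2 * (1 - r) ^ 4 + (1 - q ^ 2) * (1 - r) ^ 3 + (1 - q) ^ 3 * r ^ 3))
          / ((1 - r) ^ 2 * (1 - q * r) ^ 2) := by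
      rw [mul_div_assoc', mul_div_assoc', mul_div_assoc', div_add_div _ _ (by positivity) (by positivity),
        div_add_div _ _ (by positivity) (by positivity), div_sub_div _ _ (by positivity) (by positivity),
        div_eq_div_iff (by positivity) (by positivity)]
      ring
    have hnum : 0 ≤ (L - (1 - q)) * (r * (1 - q * r) ^ 2 + q * r * (1 - r) ^ 2)
        + (q ^ 2 * (1 - r) ^ 4 + (1 - q ^ 2) * (1 - r) ^ 3 + (1 - q) ^ 3 * r ^ 3) := by
      have h1 : 0 ≤ L - (1 - q) := by linarith
      have h2 : 0 ≤ r * (1 - q * r) ^ 2 + q * r * (1 - r) ^ 2 :=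
        add_nonneg (mul_nonneg hr0.le (sq_nonneg _)) (mul_nonneg hR0.le (sq_nonneg _))
      have h3 : 0 ≤ 1 - q ^ 2 := by nlinarith
      have h4 : 0 ≤ (1 - q) ^ 3 := pow_nonneg (by linarith) 3
      have h5 : 0 ≤ q ^ 2 * (1 - r) ^ 4 := mul_nonneg (sq_nonneg q) (pow_nonneg hr2.le 4)
      have h6 : 0 ≤ (1 - q ^ 2) * (1 - r) ^ 3 := mul_nonneg h3 (pow_nonneg hr2.le 3)
      have h7 : 0 ≤ (1 - q) ^ 3 * r ^ 3 := mul_nonneg h4 (pow_nonneg hr0.le 3)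
      nlinarith [mul_nonneg h1 h2]
    have hden : 0 < (1 - r) ^ 2 * (1 - q * r) ^ 2 := mul_pos (pow_pos hr2 2) (pow_pos hR2 2)
    have := div_nonneg hnum hden.le
    linarith [e ▸ this]
  -- combine with lower bound for qS (y+1)
  have hmain : (1 + r) / (1 - r) ≤ L * (r / (1 - r) ^ 2) + 2 * (L * qS q (y + 1)) + 2 := by
    have hid : (3 * r - 1) / (1 - r) + 2 = (1 + r) / (1 - r) := by
      field_simp; ring
    linarith
  -- final assembly
  set A' : ℝ := qS q (y + 1)
  set d : ℝ := r / (1 - r) ^ 2 with hddef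
  have hd0 : 0 < d := div_pos hr0 (pow_pos hr2 2)
  have hA : qS q y = A' + d := by linarith
  have hgoal1 : L * (qT q y - qT q (y + 1)) = (L * d) * ((1 + r) / (1 - r)) := by
    rw [hTsub, hddef]
    field_simp
  have hgoal2 : (L * d) * ((1 + r) / (1 - r)) ≤ (L * d) * (L * d + 2 * (L * A') + 2) := by
    apply mul_le_mul_of_nonneg_left _ (mul_pos hL hd0).le
    calc (1 + r) / (1 - r) ≤ L * d + 2 * (L * A') + 2 := by rw [hddef]; linarith
      _ = L * d + 2 * (L * A') + 2 := rfl
  have hexpand : (L * qS q y + 1) ^ 2 - (L * A' + 1) ^ 2 = (L * d) * (L * d + 2 * (L * A') + 2) := by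
    rw [hA]; ring
  rw [mul_sub] at hgoal1
  have h9 : L * qT q y - L * qT q (y + 1) ≤ (L * qS q y + 1) ^ 2 - (L * A' + 1) ^ 2 := by
    calc L * qT q y - L * qT q (y + 1) = L * d * ((1 + r) / (1 - r)) := hgoal1
      _ ≤ L * d * (L * d + 2 * (L * A') + 2) := hgoal2
      _ = (L * qS q y + 1) ^ 2 - (L * A' + 1) ^ 2 := hexpand.symm
  clear_value L r A' d
  linarith

lemma main_ineq {q : ℝ} (hq0 : 0 < q) (hq1 : q < 1) {x : ℝ} (hx : 0 < x) :
    1 + -Real.log q * qT q x ≤ (-Real.log q * qS q x + 1) ^ 2 := by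
  set L : ℝ := -Real.log q with hLdef
  have hL : 0 < L := by
    have := Real.log_neg hq0 hq1; rw [hLdef]; linarith
  set v : ℕ → ℝ := fun n => (L * qS q (x + (n : ℝ)) + 1) ^ 2 - L * qT q (x + (n : ℝ)) with hv
  have hstep : ∀ n : ℕ, v (n + 1) ≤ v n := by
    intro n
    have hy : 0 < x + (n : ℝ) := by positivity
    have h := step_ineq hq0 hq1 hy
    have hcast : x + ((n : ℕ) + 1 : ℝ) = (x + (n : ℝ)) + 1 := by ring
    simp only [hv, Nat.cast_add, Nat.cast_one, ← hLdef]
    rw [show x + ((n : ℝ) + 1) = (x + (n : ℝ)) + 1 by ring]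
    exact h
  have hanti : Antitone v := antitone_nat_of_succ_le hstep
  -- limits
  have hq' : |q| < 1 := by rw [abs_of_pos hq0]; exact hq1
  have hpow : Tendsto (fun n : ℕ => q ^ n) atTop (𝓝 0) := tendsto_pow_atTop_nhds_zero_of_abs_lt_one hq'
  have hS0 : Tendsto (fun n : ℕ => qS q (x + (n : ℝ))) atTop (𝓝 0) := by
    apply squeeze_zero (fun n => qS_nonneg hq0 hq1 _) (fun n => qS_shift_le hq0 hq1 hx n)
    simpa using hpow.mul_const (qS q x)
  have hT0 : Tendsto (fun n : ℕ => qT q (x + (n : ℝ))) atTop (𝓝 0) := by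
    apply squeeze_zero (fun n => qT_nonneg hq0 hq1 _) (fun n => qT_shift_le hq0 hq1 hx n)
    simpa using hpow.mul_const (qT q x)
  have hlim : Tendsto v atTop (𝓝 1) := by
    have h1 := (((hS0.const_mul L).add_const 1).pow 2).sub (hT0.const_mul L)
    simpa using h1
  have h0 : 1 ≤ v 0 := le_of_tendsto hlim (Eventually.of_forall fun n => hanti (Nat.zero_le n))
  simp only [hv, Nat.cast_zero, add_zero] at h0
  linarith

/-- The q-digamma function for `0 < q < 1`:
`ψ_q(x) = −ln(1−q) + (ln q)·∑_{k=1}^∞ q^{kx}/(1 − q^k)`. -/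
noncomputable def qDigammaLt (q x : ℝ) : ℝ :=
  -Real.log (1 - q) +
    Real.log q * ∑' k : ℕ, q ^ (((k : ℝ) + 1) * x) / (1 - q ^ (k + 1))

lemma qDigamma_eq {q : ℝ} (hq0 : 0 < q) :
    qDigammaLt q = fun y => -Real.log (1 - q) +
      Real.log q * ∑' k : ℕ, (1 - q ^ (k + 1))⁻¹ * Real.exp (((k : ℝ) + 1) * Real.log q * y) := by
  funext y
  unfold qDigammaLt
  congr 2
  apply tsum_congr
  intro k
  rw [Real.rpow_def_of_pos hq0, div_eq_inv_mul,
    show Real.log q * (((k : ℝ) + 1) * y) = ((k : ℝ) + 1) * Real.log q * y by ring]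

lemma hasDerivAt_qDigamma {q : ℝ} (hq0 : 0 < q) (hq1 : q < 1) {y : ℝ} (hy : 0 < y) :
    HasDerivAt (qDigammaLt q) (Real.log q ^ 2 * qS q y) y := by
  rw [qDigamma_eq hq0]
  have hb : ∀ k : ℕ, |(1 - q ^ (k + 1))⁻¹| ≤ (1 - q)⁻¹ * ((k : ℝ) + 1) := by
    intro k
    have h1 := one_sub_pow_pos hq0 hq1 k
    have h2 := inv_one_sub_pow_le hq0 hq1 k
    have h3 : (0:ℝ) < 1 - q := by linarith
    rw [abs_of_pos (inv_pos.2 h1)]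
    calc (1 - q ^ (k + 1))⁻¹ ≤ (1 - q)⁻¹ := h2
      _ = (1 - q)⁻¹ * 1 := by ring
      _ ≤ (1 - q)⁻¹ * ((k : ℝ) + 1) := by
          apply mul_le_mul_of_nonneg_left (le_add_of_nonneg_left (Nat.cast_nonneg k)) (by positivity)
  have hd := (hasDerivAt_tsum_exp hq0 hq1 (fun k => (1 - q ^ (k + 1))⁻¹) ((1 - q)⁻¹) hb hy
    ).const_mul (Real.log q)
  have hval : Real.log q * ∑' k : ℕ, (1 - q ^ (k + 1))⁻¹ * (((k : ℝ) + 1) * Real.log q)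
      * Real.exp (((k : ℝ) + 1) * Real.log q * y) = Real.log q ^ 2 * qS q y := by
    unfold qS
    rw [← tsum_mul_left, ← tsum_mul_left]
    apply tsum_congr
    intro k
    ring
  rw [hval] at hd
  exact hd.const_add _

lemma hasDerivAt_qS2 {q : ℝ} (hq0 : 0 < q) (hq1 : q < 1) {y : ℝ} (hy : 0 < y) :
    HasDerivAt (fun z => Real.log q ^ 2 * qS q z) (Real.log q ^ 3 * qT q y) y := by
  have hb : ∀ k : ℕ, |((k : ℝ) + 1) * (1 - q ^ (k + 1))⁻¹| ≤ (1 - q)⁻¹ * ((k : ℝ) + 1) := by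
    intro k
    have h1 := one_sub_pow_pos hq0 hq1 k
    have h2 := inv_one_sub_pow_le hq0 hq1 k
    rw [abs_of_pos (by positivity)]
    calc ((k : ℝ) + 1) * (1 - q ^ (k + 1))⁻¹ ≤ ((k : ℝ) + 1) * (1 - q)⁻¹ :=
          mul_le_mul_of_nonneg_left h2 (by positivity)
      _ = (1 - q)⁻¹ * ((k : ℝ) + 1) := by ring
  have hd := (hasDerivAt_tsum_exp hq0 hq1
    (fun k => ((k : ℝ) + 1) * (1 - q ^ (k + 1))⁻¹) ((1 - q)⁻¹) hb hy).const_mul (Real.log q ^ 2)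
  have hfun : (fun z => Real.log q ^ 2 * ∑' k : ℕ, ((k : ℝ) + 1) * (1 - q ^ (k + 1))⁻¹
      * Real.exp (((k : ℝ) + 1) * Real.log q * z)) = fun z => Real.log q ^ 2 * qS q z := by
    unfold qS; rfl
  have hval : Real.log q ^ 2 * ∑' k : ℕ, ((k : ℝ) + 1) * (1 - q ^ (k + 1))⁻¹
      * (((k : ℝ) + 1) * Real.log q) * Real.exp (((k : ℝ) + 1) * Real.log q * y)
      = Real.log q ^ 3 * qT q y := by
    unfold qT
    rw [← tsum_mul_left, ← tsum_mul_left]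
    apply tsum_congr
    intro k
    ring
  rw [hfun, hval] at hd
  exact hd

/-- For `0 < q < 1` and `x > 0`, `(ψ_q′(x) − ln q)² + ψ_q″(x) > 0`. -/
theorem positivity_q_lt_one (q : ℝ) (hq0 : 0 < q) (hq1 : q < 1) (x : ℝ) (hx : 0 < x) :
    0 < (deriv (qDigammaLt q) x - Real.log q) ^ 2 + deriv (deriv (qDigammaLt q)) x := by
  have hd1 : deriv (qDigammaLt q) x = Real.log q ^ 2 * qS q x :=
    (hasDerivAt_qDigamma hq0 hq1 hx).deriv
  have hev : deriv (qDigammaLt q) =ᶠ[𝓝 x] fun z => Real.log q ^ 2 * qS q z := by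
    filter_upwards [IsOpen.mem_nhds isOpen_Ioi hx] with z hz
    exact (hasDerivAt_qDigamma hq0 hq1 hz).deriv
  have hd2 : deriv (deriv (qDigammaLt q)) x = Real.log q ^ 3 * qT q x := by
    rw [hev.deriv_eq, (hasDerivAt_qS2 hq0 hq1 hx).deriv]
  rw [hd1, hd2]
  have hlq : Real.log q < 0 := Real.log_neg hq0 hq1
  have hmain := main_ineq hq0 hq1 hx
  have hid : (Real.log q ^ 2 * qS q x - Real.log q) ^ 2 + Real.log q ^ 3 * qT q x
      = Real.log q ^ 2 * ((-Real.log q * qS q x + 1) ^ 2 - (1 + -Real.log q * qT q x))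
        + Real.log q ^ 2 := by ring
  rw [hid]
  have h1 : 0 < Real.log q ^ 2 := by nlinarith [hlq]
  have h2 : 0 ≤ (-Real.log q * qS q x + 1) ^ 2 - (1 + -Real.log q * qT q x) := by linarith
  nlinarith
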